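/- The map f : ℂ → ℂ defined by f(z) = φ(z) + T(Im φ(z)), where φ(0) = 0, φ(z) = z²/|z| for z ≠ 0, and T(s) = 2|s|/√3 + 2, has no periodic points: for every z ∈ ℂ and every integer n ≥ 1, fⁿ(z) ≠ z. -/

import Mathlib

open Complex

/-- The degree-two angle-doubling map `φ(r e^{iθ}) = r e^{2iθ}`. -/
noncomputable def phiMap (z : ℂ) : ℂ :=
  if z = 0 then 0 else z ^ 2 / (‖z‖ : ℂ)

/-- The translation amount `T(s) = 2|s|/√3 + 2`. -/
noncomputable def Tshift (s : ℝ) : ℝ := 2 * |s| / Real.sqrt 3 + 2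

/-- The map `f(z) = φ(z) + T(Im φ(z))`. -/
noncomputable def fMap (z : ℂ) : ℂ := phiMap z + (Tshift ((phiMap z).im) : ℂ)

/-- Lyapunov-type function. -/
noncomputable def uval (z : ℂ) : ℝ := z.re - |z.im| / Real.sqrt 3

lemma sqrt3_pos : (0:ℝ) < Real.sqrt 3 := Real.sqrt_pos.mpr (by norm_num)

lemma sqrt3_sq : Real.sqrt 3 ^ 2 = 3 := Real.sq_sqrt (by norm_num)

lemma phi_re (z : ℂ) : (phiMap z).re = (z.re ^ 2 - z.im ^ 2) / ‖z‖ := by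
  by_cases hz : z = 0
  · simp [phiMap, hz]
  · rw [phiMap, if_neg hz, Complex.div_ofReal_re]
    congr 1
    rw [pow_two, Complex.mul_re]; ring

lemma phi_im (z : ℂ) : (phiMap z).im = 2 * z.re * z.im / ‖z‖ := by
  by_cases hz : z = 0
  · simp [phiMap, hz]
  · rw [phiMap, if_neg hz, Complex.div_ofReal_im]
    congr 1
    rw [pow_two, Complex.mul_im]; ring

lemma fMap_re (z : ℂ) : (fMap z).re = (phiMap z).re + Tshift ((phiMap z).im) := by
  simp [fMap]

lemma fMap_im (z : ℂ) : (fMap z).im = (phiMap z).im := by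
  simp [fMap]

lemma u_fMap (z : ℂ) :
    uval (fMap z) = (phiMap z).re + |(phiMap z).im| / Real.sqrt 3 + 2 := by
  have hs : Real.sqrt 3 ≠ 0 := ne_of_gt sqrt3_pos
  rw [uval, fMap_re, fMap_im, Tshift]
  field_simp
  ring

lemma r_sq (z : ℂ) : ‖z‖ ^ 2 = z.re ^ 2 + z.im ^ 2 := by
  rw [Complex.sq_norm, Complex.normSq_apply]; ring

/-- Lemma A: on `u ≥ 0`, the value of `u` increases by at least 2 under `fMap`. -/
lemma lemA (z : ℂ) (h : 0 ≤ uval z) : uval z + 2 ≤ uval (fMap z) := by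
  rcases eq_or_ne z 0 with rfl | hz
  · rw [u_fMap]
    simp [uval, phiMap]
  · rw [u_fMap, phi_re, phi_im]
    rw [uval] at *
    have hr : 0 < ‖z‖ := norm_pos_iff.mpr hz
    have hr2 := r_sq z
    have hs : (0:ℝ) < Real.sqrt 3 := sqrt3_pos
    have hs2 := sqrt3_sq
    set s := Real.sqrt 3
    set r := ‖z‖
    set x := z.re
    set y := z.im
    have ha : (0:ℝ) ≤ |y| := abs_nonneg y
    have ha2 : |y| ^ 2 = y ^ 2 := sq_abs y
    have hx : |y| ≤ s * x := by
      rw [sub_nonneg, div_le_iff₀ hs] at h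
      linarith
    have hx0 : (0:ℝ) ≤ x := by nlinarith
    have habs : |2 * x * y| = 2 * x * |y| := by
      rw [abs_mul, _root_.abs_of_nonneg (by positivity : (0:ℝ) ≤ 2 * x)]
    have hnn : (0:ℝ) ≤ x + s * |y| := by positivity
    have h2 : r ^ 2 ≤ (x + s * |y|) ^ 2 := by nlinarith
    have key : r ≤ x + s * |y| := by
      by_contra hc
      push_neg at hc
      have h3 : (0:ℝ) < r - (x + s * |y|) := by linarith
      nlinarith [mul_pos h3 hr, mul_nonneg h3.le hnn]
    have hfac : 0 ≤ (s * x - |y|) * (x + s * |y| - r) :=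
      mul_nonneg (by linarith) (by linarith)
    have hfac2 : r * (s * x - |y|) ≤ s * (x ^ 2 - y ^ 2) + 2 * x * |y| := by
      nlinarith [hfac, mul_nonneg hx0 ha]
    rw [abs_div, abs_norm, habs]
    have final : x - |y| / s ≤ (x ^ 2 - y ^ 2) / r + 2 * x * |y| / r / s := by
      rw [div_div, ← sub_nonneg]
      have heq : (x ^ 2 - y ^ 2) / r + 2 * x * |y| / (r * s) - (x - |y| / s)
          = (s * (x ^ 2 - y ^ 2) + 2 * x * |y| - r * (s * x - |y|)) / (r * s) := by
        field_simp
      rw [heq]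
      exact div_nonneg (by linarith) (by positivity)
    linarith

/-- Lemma B: if `u` is negative after one step, `z` was in the middle sector. -/
lemma lemB (z : ℂ) (h : uval (fMap z) < 0) : Real.sqrt 3 * |z.re| < |z.im| := by
  rcases eq_or_ne z 0 with rfl | hz
  · rw [u_fMap] at h
    norm_num [phiMap] at h
  · rw [u_fMap, phi_re, phi_im] at h
    have hr : 0 < ‖z‖ := norm_pos_iff.mpr hz
    have hr2 := r_sq z
    have hs : (0:ℝ) < Real.sqrt 3 := sqrt3_pos
    have hs2 := sqrt3_sq
    set s := Real.sqrt 3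
    set r := ‖z‖
    set x := z.re
    set y := z.im
    have ha : (0:ℝ) ≤ |y| := abs_nonneg y
    have hb : (0:ℝ) ≤ |x| := abs_nonneg x
    have ha2 : |y| ^ 2 = y ^ 2 := sq_abs y
    have hb2 : |x| ^ 2 = x ^ 2 := sq_abs x
    have habs : |2 * x * y| = 2 * |x| * |y| := by
      rw [abs_mul, abs_mul]; norm_num
    rw [abs_div, abs_norm, habs] at h
    by_contra hcon
    push_neg at hcon
    have hfac : 0 ≤ (s * |x| - |y|) * (|x| + s * |y|) :=
      mul_nonneg (by linarith) (by positivity)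
    have hnum : s * (x ^ 2 - y ^ 2) + 2 * |x| * |y| + 2 * s * r < 0 := by
      have hmul : ((x ^ 2 - y ^ 2) / r + 2 * |x| * |y| / r / s + 2) * (r * s) < 0 * (r * s) :=
        mul_lt_mul_of_pos_right h (mul_pos hr hs)
      rw [zero_mul] at hmul
      calc s * (x ^ 2 - y ^ 2) + 2 * |x| * |y| + 2 * s * r
          = ((x ^ 2 - y ^ 2) / r + 2 * |x| * |y| / r / s + 2) * (r * s) := by
            field_simp
        _ < 0 := hmul
    nlinarith [hfac, mul_pos hr hs]

/-- Lemma C: in the middle sector, `|Im|` strictly decreases under `fMap`. -/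
lemma lemC (z : ℂ) (h : Real.sqrt 3 * |z.re| < |z.im|) : |(fMap z).im| < |z.im| := by
  have hz : z ≠ 0 := by
    intro h0
    rw [h0] at h
    simp at h
  rw [fMap_im, phi_im]
  have hr : 0 < ‖z‖ := norm_pos_iff.mpr hz
  have hr2 := r_sq z
  have hs : (0:ℝ) < Real.sqrt 3 := sqrt3_pos
  have hs2 := sqrt3_sq
  set s := Real.sqrt 3
  set r := ‖z‖
  set x := z.re
  set y := z.im
  have hy : 0 < |y| := lt_of_le_of_lt (by positivity) h
  have hb : (0:ℝ) ≤ |x| := abs_nonneg x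
  have ha2 : |y| ^ 2 = y ^ 2 := sq_abs y
  have hb2 : |x| ^ 2 = x ^ 2 := sq_abs x
  have habs : |2 * x * y| = 2 * |x| * |y| := by
    rw [abs_mul, abs_mul]; norm_num
  have h3 : 3 * x ^ 2 < y ^ 2 := by
    have hsum : (0:ℝ) < s * |x| + |y| := by positivity
    have := mul_lt_mul_of_pos_right h hsum
    nlinarith [this]
  have h2x : 2 * |x| < r := by
    by_contra hc
    push_neg at hc
    have hmul : r * r ≤ (2 * |x|) * (2 * |x|) :=
      mul_le_mul hc hc hr.le (by positivity)
    nlinarith [hmul]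
  rw [abs_div, abs_norm, habs, div_lt_iff₀ hr]
  nlinarith [mul_lt_mul_of_pos_right h2x hy]

theorem fMap_has_no_periodic_points :
    ∀ (z : ℂ) (n : ℕ), 1 ≤ n → fMap^[n] z ≠ z := by
  intro z n hn h
  by_cases H : ∃ k, 0 ≤ uval (fMap^[k] z)
  · obtain ⟨k, hk⟩ := H
    have mono : ∀ m : ℕ, uval (fMap^[k] z) + 2 * m ≤ uval (fMap^[k + m] z) := by
      intro m
      induction m with
      | zero => simp
      | succ m ih =>
        have h2m : (0:ℝ) ≤ 2 * m := by positivity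
        have h0 : 0 ≤ uval (fMap^[k + m] z) := by linarith
        have step := lemA _ h0
        have hidx : k + (m + 1) = (k + m) + 1 := by omega
        rw [hidx, Function.iterate_succ_apply']
        push_cast
        push_cast at ih
        linarith
    have hkn : fMap^[k + n] z = fMap^[k] z := by
      rw [Function.iterate_add_apply, h]
    have hmn := mono n
    rw [hkn] at hmn
    have hn' : (1:ℝ) ≤ (n:ℝ) := by exact_mod_cast hn
    linarith
  · push_neg at H
    have dec : ∀ m : ℕ, |(fMap^[m + 1] z).im| < |(fMap^[m] z).im| := by
      intro m
      have hb := H (m + 1)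
      rw [Function.iterate_succ_apply'] at hb
      have hmid := lemB _ hb
      have hlt := lemC _ hmid
      rw [Function.iterate_succ_apply']
      exact hlt
    have anti : StrictAnti fun m : ℕ => |(fMap^[m] z).im| :=
      strictAnti_nat_of_succ_lt dec
    have hfin := anti (show 0 < n by omega)
    simp only [Function.iterate_zero_apply] at hfin
    rw [h] at hfin
    exact lt_irrefl _ hfin
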